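/- A Borel measurable function F : [0,∞)^K → [0,∞) is a generalised e-merging function (F(E_1,…,E_K) is an e-variable for every K-tuple of e-variables on any common probability space) if and only if there exists w ∈ [0,1]^K with ∑_k w_k ≤ 1 such that F(u) ≤ 1 + ∑_k w_k (u_k − 1) for all u ∈ [0,∞)^K. -/

import Mathlib

open BigOperators MeasureTheory Pointwise

lemma lemA {K : ℕ} (F : (Fin K → ℝ) → ℝ)
    (hFnn : ∀ u : Fin K → ℝ, (∀ k, 0 ≤ u k) → 0 ≤ F u)
    (hyp : ∀ (X : Type) (_ : MeasurableSpace X) (Q : Measure X),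
      IsProbabilityMeasure Q →
      ∀ E : Fin K → X → ℝ, (∀ k, Measurable (E k)) → (∀ k x, 0 ≤ E k x) →
      (∀ k, ∫⁻ x, ENNReal.ofReal (E k x) ∂Q ≤ 1) →
      ∫⁻ x, ENNReal.ofReal (F (fun k => E k x)) ∂Q ≤ 1)
    {ι : Type} (t : Finset ι) (p : ι → ℝ) (hp : ∀ i ∈ t, 0 ≤ p i)
    (hp1 : ∑ i ∈ t, p i = 1) (u : ι → Fin K → ℝ) (hu : ∀ i ∈ t, ∀ k, 0 ≤ u i k)
    (M : ℝ) (hM1 : 1 ≤ M) (hMk : ∀ k, ∑ i ∈ t, p i * u i k ≤ M) :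
    ∑ i ∈ t, p i * F (u i) ≤ M := by
  have hM0 : (0:ℝ) < M := lt_of_lt_of_le one_pos hM1
  set X := Option {x // x ∈ t} with hX
  letI : MeasurableSpace X := ⊤
  set c : X → ℝ := fun x => Option.elim x (1 - 1/M) (fun i => p i.1 / M) with hc
  have hcnn : ∀ x, 0 ≤ c x := by
    rintro (_|i)
    · simp only [c, Option.elim]
      have : (1:ℝ)/M ≤ 1 := by
        rw [div_le_one hM0]; exact hM1
      linarith
    · exact div_nonneg (hp i.1 i.2) hM0.le
  set Q : Measure X := ∑ x : X, (ENNReal.ofReal (c x)) • Measure.dirac x with hQ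
  have hlint : ∀ g : X → ENNReal, ∫⁻ x, g x ∂Q = ∑ x : X, ENNReal.ofReal (c x) * g x := by
    intro g
    rw [hQ, lintegral_finset_sum_measure]
    refine Finset.sum_congr rfl (fun x _ => ?_)
    rw [lintegral_smul_measure, lintegral_dirac' _ (measurable_from_top), smul_eq_mul]
  have hcsum : ∑ x : X, ENNReal.ofReal (c x) = 1 := by
    rw [← ENNReal.ofReal_sum_of_nonneg (fun x _ => hcnn x)]
    have : ∑ x : X, c x = 1 := by
      rw [Fintype.sum_option]
      simp only [c, Option.elim]
      rw [Finset.sum_coe_sort t (fun i => p i / M), ← Finset.sum_div, hp1]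
      field_simp
      ring
    rw [this, ENNReal.ofReal_one]
  have hQprob : IsProbabilityMeasure Q := by
    constructor
    have := hlint (fun _ => 1)
    rw [lintegral_one] at this
    simp only [mul_one] at this
    rw [this, hcsum]
  set E : Fin K → X → ℝ := fun k x => Option.elim x 0 (fun i => u i.1 k) with hE
  have hEnn : ∀ k x, 0 ≤ E k x := by
    rintro k (_|i)
    · exact le_refl 0
    · exact hu i.1 i.2 k
  have hEint : ∀ k, ∫⁻ x, ENNReal.ofReal (E k x) ∂Q ≤ 1 := by
    intro k
    rw [hlint]
    have : ∀ x : X, ENNReal.ofReal (c x) * ENNReal.ofReal (E k x)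
        = ENNReal.ofReal (c x * E k x) := fun x => (ENNReal.ofReal_mul (hcnn x)).symm
    simp_rw [this]
    rw [← ENNReal.ofReal_sum_of_nonneg (fun x _ => mul_nonneg (hcnn x) (hEnn k x))]
    rw [← ENNReal.ofReal_one]
    apply ENNReal.ofReal_le_ofReal
    rw [Fintype.sum_option]
    simp only [c, E, Option.elim, mul_zero, zero_add]
    rw [Finset.sum_coe_sort t (fun i => p i / M * u i k)]
    have : ∑ i ∈ t, p i / M * u i k = (∑ i ∈ t, p i * u i k) / M := by
      rw [Finset.sum_div]; exact Finset.sum_congr rfl (fun i _ => by ring)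
    rw [this, div_le_one hM0]
    exact hMk k
  have hmain := hyp X _ Q hQprob E (fun k => measurable_from_top) hEnn hEint
  rw [hlint] at hmain
  have hFeq : ∀ x : X, ENNReal.ofReal (c x) * ENNReal.ofReal (F (fun k => E k x))
      = ENNReal.ofReal (c x * F (fun k => E k x)) :=
    fun x => (ENNReal.ofReal_mul (hcnn x)).symm
  simp_rw [hFeq] at hmain
  have hFnn' : ∀ x : X, 0 ≤ F (fun k => E k x) := fun x => hFnn _ (fun k => hEnn k x)
  rw [← ENNReal.ofReal_sum_of_nonneg (fun x _ => mul_nonneg (hcnn x) (hFnn' x)),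
    ENNReal.ofReal_le_one] at hmain
  rw [Fintype.sum_option] at hmain
  have h0 : (fun k => E k (none : X)) = (fun _ => (0:ℝ)) := rfl
  have hsome : ∀ i : {x // x ∈ t}, (fun k => E k (some i)) = u i.1 := fun i => rfl
  rw [h0] at hmain
  simp_rw [hsome] at hmain
  have hcs : ∀ i : {x // x ∈ t}, c (some i) = p i.1 / M := fun _ => rfl
  simp_rw [hcs] at hmain
  rw [Finset.sum_coe_sort t (fun i => p i / M * F (u i))] at hmain
  have h1 : 0 ≤ c (none : X) * F (fun _ => (0:ℝ)) :=
    mul_nonneg (hcnn none) (hFnn _ (fun _ => le_refl 0))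
  have h2 : ∑ i ∈ t, p i / M * F (u i) ≤ 1 := by
    have : c (none : X) = 1 - 1/M := rfl
    linarith [hmain, h1]
  have h3 : ∑ i ∈ t, p i / M * F (u i) = (∑ i ∈ t, p i * F (u i)) / M := by
    rw [Finset.sum_div]; exact Finset.sum_congr rfl (fun i _ => by ring)
  rw [h3, div_le_one hM0] at h2
  linarith

lemma hullD {K : ℕ} (hK : 1 ≤ K) (F : (Fin K → ℝ) → ℝ)
    (hFnn : ∀ u : Fin K → ℝ, (∀ k, 0 ≤ u k) → 0 ≤ F u)
    (hyp : ∀ (X : Type) (_ : MeasurableSpace X) (Q : Measure X),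
      IsProbabilityMeasure Q →
      ∀ E : Fin K → X → ℝ, (∀ k, Measurable (E k)) → (∀ k x, 0 ≤ E k x) →
      (∀ k, ∫⁻ x, ENNReal.ofReal (E k x) ∂Q ≤ 1) →
      ∫⁻ x, ENNReal.ofReal (F (fun k => E k x)) ∂Q ≤ 1) :
    convexHull ℝ {z : (Fin K → ℝ) × ℝ |
        ∃ u : Fin K → ℝ, (∀ k, 0 ≤ u k) ∧ z = (fun k => u k - 1, F u - 1)} ⊆
      {z : (Fin K → ℝ) × ℝ | z.2 ≤ 0 ∨ ∃ k, z.2 ≤ z.1 k} := by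
  intro x hx
  rw [convexHull_eq] at hx
  obtain ⟨ι, t, p, z, hp0, hp1, hzG, hcm⟩ := hx
  rw [Finset.centerMass_eq_of_sum_1 _ _ hp1] at hcm
  have hex : ∀ i : ι, ∃ v : Fin K → ℝ, (∀ k, 0 ≤ v k) ∧
      (i ∈ t → z i = (fun k => v k - 1, F v - 1)) := by
    intro i
    by_cases h : i ∈ t
    · obtain ⟨v, hv, hzv⟩ := hzG i h
      exact ⟨v, hv, fun _ => hzv⟩
    · exact ⟨fun _ => 0, fun _ => le_refl 0, fun h' => absurd h' h⟩
  choose v hv hzv using hex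
  have hx1 : ∀ k, x.1 k = (∑ i ∈ t, p i * v i k) - 1 := by
    intro k
    rw [← hcm, Prod.fst_sum, Finset.sum_apply]
    have : ∀ i ∈ t, (p i • z i).1 k = p i * v i k - p i := by
      intro i hi
      rw [hzv i hi]
      simp [mul_sub]
    rw [Finset.sum_congr rfl this, Finset.sum_sub_distrib, hp1]
  have hx2 : x.2 = (∑ i ∈ t, p i * F (v i)) - 1 := by
    rw [← hcm, Prod.snd_sum]
    have : ∀ i ∈ t, (p i • z i).2 = p i * F (v i) - p i := by
      intro i hi
      rw [hzv i hi]
      simp [mul_sub]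
    rw [Finset.sum_congr rfl this, Finset.sum_sub_distrib, hp1]
  haveI : Nonempty (Fin K) := ⟨⟨0, hK⟩⟩
  set S := Finset.univ.sup' Finset.univ_nonempty (fun k => ∑ i ∈ t, p i * v i k) with hS
  set M := max 1 S with hM
  have hMk : ∀ k, ∑ i ∈ t, p i * v i k ≤ M := by
    intro k
    have h1 : ∑ i ∈ t, p i * v i k ≤ S :=
      Finset.le_sup' (fun k => ∑ i ∈ t, p i * v i k) (Finset.mem_univ k)
    exact le_trans h1 (le_max_right 1 S)
  have hFle : ∑ i ∈ t, p i * F (v i) ≤ M :=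
    lemA F hFnn hyp t p hp0 hp1 v (fun i hi => hv i) M (le_max_left 1 S) hMk
  rcases le_or_gt S 1 with h | h
  · left
    rw [hx2]
    have : M = 1 := max_eq_left h
    linarith [hFle, this]
  · right
    obtain ⟨j, _, hj⟩ := Finset.exists_mem_eq_sup' (Finset.univ_nonempty (α := Fin K))
      (fun k => ∑ i ∈ t, p i * v i k)
    refine ⟨j, ?_⟩
    rw [hx2, hx1 j]
    have hMS : M = S := max_eq_right h.le
    have : S = ∑ i ∈ t, p i * v i j := hj
    linarith [hFle]

lemma keyEps {K : ℕ} (hK : 1 ≤ K) (F : (Fin K → ℝ) → ℝ)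
    (hFnn : ∀ u : Fin K → ℝ, (∀ k, 0 ≤ u k) → 0 ≤ F u)
    (hyp : ∀ (X : Type) (_ : MeasurableSpace X) (Q : Measure X),
      IsProbabilityMeasure Q →
      ∀ E : Fin K → X → ℝ, (∀ k, Measurable (E k)) → (∀ k x, 0 ≤ E k x) →
      (∀ k, ∫⁻ x, ENNReal.ofReal (E k x) ∂Q ≤ 1) →
      ∫⁻ x, ENNReal.ofReal (F (fun k => E k x)) ∂Q ≤ 1)
    (ε : ℝ) (hε : 0 < ε) :
    ∃ w : Fin K → ℝ, (∀ k, 0 ≤ w k) ∧ ∑ k, w k ≤ 1 ∧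
      ∀ u : Fin K → ℝ, (∀ k, 0 ≤ u k) → F u ≤ 1 + ∑ k, w k * (u k - 1) + ε := by
  classical
  set G : Set ((Fin K → ℝ) × ℝ) := {z | ∃ u : Fin K → ℝ, (∀ k, 0 ≤ u k) ∧
    z = (fun k => u k - 1, F u - 1)} with hGdef
  set Qc : Set ((Fin K → ℝ) × ℝ) := {z | z.2 ≤ 0 ∧ ∀ k, z.2 ≤ z.1 k} with hQdef
  set Dset : Set ((Fin K → ℝ) × ℝ) := {z | z.2 ≤ 0 ∨ ∃ k, z.2 ≤ z.1 k} with hDdef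
  have hQconv : Convex ℝ Qc := by
    intro q1 hq1 q2 hq2 s t hs ht hst
    constructor
    · have : (s • q1 + t • q2).2 = s * q1.2 + t * q2.2 := by
        simp [smul_eq_mul]
      rw [this]
      have := mul_nonpos_of_nonneg_of_nonpos hs hq1.1
      have := mul_nonpos_of_nonneg_of_nonpos ht hq2.1
      linarith
    · intro k
      have h1 : (s • q1 + t • q2).2 = s * q1.2 + t * q2.2 := by simp [smul_eq_mul]
      have h2 : (s • q1 + t • q2).1 k = s * q1.1 k + t * q2.1 k := by simp [smul_eq_mul]
      rw [h1, h2]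
      have := mul_le_mul_of_nonneg_left (hq1.2 k) hs
      have := mul_le_mul_of_nonneg_left (hq2.2 k) ht
      linarith
  have hQ0 : (0 : (Fin K → ℝ) × ℝ) ∈ Qc := by
    constructor
    · exact le_refl 0
    · intro k; exact le_refl 0
  have hQsmul : ∀ (τ : ℝ), 0 ≤ τ → ∀ q ∈ Qc, τ • q ∈ Qc := by
    intro τ hτ q hq
    constructor
    · have : (τ • q).2 = τ * q.2 := rfl
      rw [this]; exact mul_nonpos_of_nonneg_of_nonpos hτ hq.1
    · intro k
      have h1 : (τ • q).2 = τ * q.2 := rfl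
      have h2 : (τ • q).1 k = τ * q.1 k := rfl
      rw [h1, h2]
      exact mul_le_mul_of_nonneg_left (hq.2 k) hτ
  set C' : Set ((Fin K → ℝ) × ℝ) := convexHull ℝ G + Qc with hC'def
  have hC'conv : Convex ℝ C' := (convex_convexHull ℝ G).add hQconv
  have hCD : C' ⊆ Dset := by
    rintro x hx
    rw [hC'def, Set.mem_add] at hx
    obtain ⟨c, hc, q, hq, rfl⟩ := hx
    have hcD := hullD hK F hFnn hyp hc
    rcases hcD with h | ⟨k, h⟩
    · left
      have : (c + q).2 = c.2 + q.2 := rfl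
      rw [this]; linarith [hq.1]
    · right
      refine ⟨k, ?_⟩
      have h1 : (c + q).2 = c.2 + q.2 := rfl
      have h2 : (c + q).1 k = c.1 k + q.1 k := rfl
      rw [h1, h2]
      linarith [hq.2 k]
  have hDclosed : IsClosed Dset := by
    have : Dset = {z : (Fin K → ℝ) × ℝ | z.2 ≤ 0} ∪ ⋃ k, {z : (Fin K → ℝ) × ℝ | z.2 ≤ z.1 k} := by
      ext z
      simp [hDdef, Set.mem_iUnion]
    rw [this]
    exact (isClosed_le continuous_snd continuous_const).union
      (isClosed_iUnion_of_finite fun k =>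
        isClosed_le continuous_snd ((continuous_apply k).comp continuous_fst))
  have hpt : (((0 : Fin K → ℝ), ε)) ∉ closure C' := by
    intro h
    have := closure_minimal hCD hDclosed h
    rcases this with h' | ⟨k, h'⟩
    · exact absurd h' (not_le.mpr hε)
    · simp only [Pi.zero_apply] at h'
      exact absurd h' (not_le.mpr hε)
  obtain ⟨f, u₀, hfs, hfu⟩ :=
    geometric_hahn_banach_closed_point hC'conv.closure isClosed_closure hpt
  set c₀ : (Fin K → ℝ) × ℝ := ((0 : Fin K → ℝ), F (fun _ => 1) - 1) with hc₀def
  have hc₀G : c₀ ∈ G := by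
    refine ⟨fun _ => 1, fun _ => zero_le_one, ?_⟩
    refine Prod.ext ?_ rfl
    funext k; simp [hc₀def]
  have hGC : G ⊆ C' := by
    intro g hg
    rw [hC'def, Set.mem_add]
    exact ⟨g, subset_convexHull ℝ G hg, 0, hQ0, add_zero g⟩
  have hrec : ∀ q ∈ Qc, f q ≤ 0 := by
    intro q hq
    by_contra hpos
    push_neg at hpos
    have key : ∀ τ : ℝ, 0 ≤ τ → f c₀ + τ * f q < u₀ := by
      intro τ hτ
      have hmem : c₀ + τ • q ∈ C' := by
        rw [hC'def, Set.mem_add]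
        exact ⟨c₀, subset_convexHull ℝ G hc₀G, τ • q, hQsmul τ hτ q hq, rfl⟩
      have := hfs _ (subset_closure hmem)
      rwa [map_add, f.map_smul, smul_eq_mul] at this
    have h1 : f c₀ < u₀ := by simpa using key 0 le_rfl
    have h2 := key ((u₀ - f c₀) / f q) (div_nonneg (by linarith) hpos.le)
    rw [div_mul_cancel₀ _ (ne_of_gt hpos)] at h2
    linarith
  set b : ℝ := f ((0 : Fin K → ℝ), (1 : ℝ)) with hbdef
  set a : Fin K → ℝ := fun k => f ((Pi.single k 1 : Fin K → ℝ), (0 : ℝ)) with hadef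
  have hdec : ∀ z : (Fin K → ℝ) × ℝ, f z = (∑ k, z.1 k * a k) + z.2 * b := by
    intro z
    have hz : z = (∑ k, z.1 k • (((Pi.single k 1 : Fin K → ℝ)), (0 : ℝ)))
        + z.2 • ((0 : Fin K → ℝ), (1 : ℝ)) := by
      refine Prod.ext ?_ ?_
      · simp only [Prod.fst_sum, Prod.smul_mk, Prod.fst_add, Prod.smul_fst, smul_zero]
        funext j
        simp only [Finset.sum_apply, Pi.smul_apply, Pi.single_apply, smul_eq_mul,
          mul_ite, mul_one, mul_zero, Pi.add_apply, Pi.zero_apply]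
        rw [Finset.sum_ite_eq Finset.univ j (fun k => z.1 k)]
        simp
      · simp only [Prod.snd_sum, Prod.smul_mk, Prod.snd_add, Prod.smul_snd, smul_zero,
          smul_eq_mul, mul_one]
        simp
    conv_lhs => rw [hz]
    rw [map_add, map_sum, f.map_smul, smul_eq_mul]
    congr 1
    refine Finset.sum_congr rfl (fun k _ => ?_)
    rw [f.map_smul, smul_eq_mul]
  have hb0 : 0 ≤ b := by
    have hq : (((0 : Fin K → ℝ), (-1 : ℝ))) ∈ Qc := by
      constructor
      · norm_num
      · intro k; simp
    have := hrec _ hq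
    rw [hdec] at this
    simp at this
    linarith
  have hbne : b ≠ 0 := by
    intro hb
    have h1 : f c₀ < u₀ := hfs _ (subset_closure (hGC hc₀G))
    rw [hdec] at h1 hfu
    simp [hb, hc₀def] at h1 hfu
    linarith
  have hbpos : 0 < b := lt_of_le_of_ne hb0 (Ne.symm hbne)
  have ha_le : ∀ k, a k ≤ 0 := by
    intro k
    have hq : (((Pi.single k 1 : Fin K → ℝ)), (0 : ℝ)) ∈ Qc := by
      constructor
      · exact le_refl 0
      · intro j
        simp only [Pi.single_apply]
        split_ifs <;> norm_num
    have := hrec _ hq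
    rw [hdec] at this
    simp only [Pi.single_apply, ite_mul, one_mul, zero_mul, zero_mul, add_zero] at this
    rwa [Finset.sum_ite_eq' Finset.univ k a, if_pos (Finset.mem_univ k)] at this
  set w : Fin K → ℝ := fun k => -(a k) / b with hwdef
  have hw0 : ∀ k, 0 ≤ w k := fun k => div_nonneg (neg_nonneg.mpr (ha_le k)) hb0
  have hsumw : ∑ k, w k ≤ 1 := by
    have hq : (((fun _ => -1 : Fin K → ℝ)), (-1 : ℝ)) ∈ Qc := by
      constructor
      · norm_num
      · intro k; exact le_refl _
    have hfq := hrec _ hq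
    rw [hdec] at hfq
    simp only [neg_one_mul, Finset.sum_neg_distrib] at hfq
    have hab : -(∑ k, a k) ≤ b := by linarith
    have : ∑ k, w k = (-(∑ k, a k)) / b := by
      rw [hwdef, ← Finset.sum_div, ← Finset.sum_neg_distrib]
    rw [this, div_le_one hbpos]
    exact hab
  refine ⟨w, hw0, hsumw, ?_⟩
  intro u hu
  have hgG : ((fun k => u k - 1 : Fin K → ℝ), F u - 1) ∈ G := ⟨u, hu, rfl⟩
  have h1 : f ((fun k => u k - 1 : Fin K → ℝ), F u - 1) < u₀ :=
    hfs _ (subset_closure (hGC hgG))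
  have h2 : u₀ < ε * b := by
    have := hfu
    rw [hdec] at this
    simpa using this
  rw [hdec] at h1
  simp only at h1
  have hws : (∑ k, w k * (u k - 1)) * b = -(∑ k, (u k - 1) * a k) := by
    rw [Finset.sum_mul, ← Finset.sum_neg_distrib]
    refine Finset.sum_congr rfl (fun k _ => ?_)
    rw [hwdef]
    have hbb : -a k / b * (u k - 1) * b = -a k * (u k - 1) * (b / b) := by ring
    rw [hbb, div_self hbne]
    ring
  have hlt : (F u - 1) * b < (ε + ∑ k, w k * (u k - 1)) * b := by
    rw [add_mul]
    linarith [h1, h2, hws]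
  have hfin := lt_of_mul_lt_mul_right hlt hbpos.le
  linarith

/-- a Borel measurable nonnegative `F` is a generalised e-merging
function if and only if it is dominated on the orthant by
`u ↦ 1 + ∑ w_k (u_k - 1)` for some `w ∈ [0,1]^K` with `∑ w_k ≤ 1`. -/
theorem stmt_8 (K : ℕ) (hK : 1 ≤ K) (F : (Fin K → ℝ) → ℝ)
    (hFmeas : Measurable F)
    (hF0 : ∀ u : Fin K → ℝ, (∀ k, 0 ≤ u k) → 0 ≤ F u) :
    (∀ (X : Type) (_ : MeasurableSpace X) (Q : Measure X),
      IsProbabilityMeasure Q →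
      ∀ E : Fin K → X → ℝ, (∀ k, Measurable (E k)) → (∀ k x, 0 ≤ E k x) →
      (∀ k, ∫⁻ x, ENNReal.ofReal (E k x) ∂Q ≤ 1) →
      ∫⁻ x, ENNReal.ofReal (F (fun k => E k x)) ∂Q ≤ 1) ↔
    (∃ w : Fin K → ℝ, (∀ k, 0 ≤ w k ∧ w k ≤ 1) ∧ ∑ k, w k ≤ 1 ∧
      ∀ u : Fin K → ℝ, (∀ k, 0 ≤ u k) → F u ≤ 1 + ∑ k, w k * (u k - 1)) := by
  constructor
  · intro hyp
    have hkey : ∀ n : ℕ, ∃ w : Fin K → ℝ, (∀ k, 0 ≤ w k) ∧ ∑ k, w k ≤ 1 ∧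
        ∀ u : Fin K → ℝ, (∀ k, 0 ≤ u k) →
          F u ≤ 1 + ∑ k, w k * (u k - 1) + 1/((n : ℝ)+1) :=
      fun n => keyEps hK F hF0 hyp (1/((n : ℝ)+1)) (by positivity)
    choose W hW0 hWs hWb using hkey
    have hmem : ∀ n, W n ∈ Set.Icc (0 : Fin K → ℝ) 1 := by
      intro n
      constructor
      · intro k
        exact hW0 n k
      · intro k
        calc W n k ≤ ∑ j, W n j :=
              Finset.single_le_sum (fun j _ => hW0 n j) (Finset.mem_univ k)
          _ ≤ 1 := hWs n
    obtain ⟨w, hwmem, φ, hφ, htend⟩ :=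
      (isCompact_Icc (a := (0 : Fin K → ℝ)) (b := 1)).tendsto_subseq hmem
    have hcoord : ∀ k, Filter.Tendsto (fun n => W (φ n) k) Filter.atTop (nhds (w k)) := by
      intro k
      exact (tendsto_pi_nhds.mp htend) k
    refine ⟨w, fun k => ⟨hwmem.1 k, hwmem.2 k⟩, ?_, ?_⟩
    · have hsum_tend : Filter.Tendsto (fun n => ∑ k, W (φ n) k) Filter.atTop
          (nhds (∑ k, w k)) :=
        tendsto_finset_sum _ (fun k _ => hcoord k)
      exact le_of_tendsto hsum_tend (Filter.Eventually.of_forall (fun n => hWs (φ n)))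
    · intro u hu
      have heps : Filter.Tendsto (fun n => 1/((φ n : ℝ)+1)) Filter.atTop (nhds 0) :=
        tendsto_one_div_add_atTop_nhds_zero_nat.comp hφ.tendsto_atTop
      have hterm : Filter.Tendsto
          (fun n => 1 + ∑ k, W (φ n) k * (u k - 1) + 1/((φ n : ℝ)+1)) Filter.atTop
          (nhds (1 + ∑ k, w k * (u k - 1) + 0)) := by
        refine Filter.Tendsto.add ?_ heps
        refine Filter.Tendsto.add tendsto_const_nhds ?_
        exact tendsto_finset_sum _ (fun k _ => (hcoord k).mul_const _)
      rw [add_zero] at hterm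
      exact ge_of_tendsto hterm
        (Filter.Eventually.of_forall (fun n => hWb (φ n) u hu))
  · rintro ⟨w, hw, hsum, hdom⟩ X mX Q hQ E hEm hEnn hEint
    have hnn1 : (0:ℝ) ≤ 1 - ∑ k, w k := by linarith
    have hptw : ∀ x, ENNReal.ofReal (F (fun k => E k x)) ≤
        ENNReal.ofReal (1 - ∑ k, w k) +
          ∑ k, ENNReal.ofReal (w k) * ENNReal.ofReal (E k x) := by
      intro x
      have hb := hdom (fun k => E k x) (fun k => hEnn k x)
      have hsplit : ∑ k, w k * (E k x - 1) = ∑ k, w k * E k x - ∑ k, w k := by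
        rw [← Finset.sum_sub_distrib]
        exact Finset.sum_congr rfl (fun k _ => by ring)
      have h1 : F (fun k => E k x) ≤ (1 - ∑ k, w k) + ∑ k, w k * E k x := by
        rw [hsplit] at hb
        linarith
      have hnn2 : ∀ k ∈ Finset.univ, (0:ℝ) ≤ w k * E k x :=
        fun k _ => mul_nonneg (hw k).1 (hEnn k x)
      calc ENNReal.ofReal (F (fun k => E k x))
          ≤ ENNReal.ofReal ((1 - ∑ k, w k) + ∑ k, w k * E k x) :=
            ENNReal.ofReal_le_ofReal h1
        _ = ENNReal.ofReal (1 - ∑ k, w k) + ENNReal.ofReal (∑ k, w k * E k x) :=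
            ENNReal.ofReal_add hnn1 (Finset.sum_nonneg hnn2)
        _ = ENNReal.ofReal (1 - ∑ k, w k) +
              ∑ k, ENNReal.ofReal (w k) * ENNReal.ofReal (E k x) := by
            rw [ENNReal.ofReal_sum_of_nonneg hnn2]
            congr 1
            exact Finset.sum_congr rfl (fun k _ => ENNReal.ofReal_mul (hw k).1)
    calc ∫⁻ x, ENNReal.ofReal (F (fun k => E k x)) ∂Q
        ≤ ∫⁻ x, (ENNReal.ofReal (1 - ∑ k, w k) +
            ∑ k, ENNReal.ofReal (w k) * ENNReal.ofReal (E k x)) ∂Q :=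
          lintegral_mono hptw
      _ = ENNReal.ofReal (1 - ∑ k, w k) +
            ∑ k, ENNReal.ofReal (w k) * ∫⁻ x, ENNReal.ofReal (E k x) ∂Q := by
          rw [lintegral_add_left measurable_const, lintegral_const, measure_univ, mul_one]
          congr 1
          rw [lintegral_finset_sum _ (fun k _ =>
            (((hEm k).ennreal_ofReal).const_mul (ENNReal.ofReal (w k))))]
          exact Finset.sum_congr rfl (fun k _ => lintegral_const_mul _
            ((hEm k).ennreal_ofReal))
      _ ≤ ENNReal.ofReal (1 - ∑ k, w k) + ∑ k, ENNReal.ofReal (w k) * 1 := by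
          refine add_le_add le_rfl (Finset.sum_le_sum (fun k _ => ?_))
          exact mul_le_mul_right (hEint k) _
      _ = ENNReal.ofReal (1 - ∑ k, w k) + ENNReal.ofReal (∑ k, w k) := by
          simp only [mul_one]
          rw [ENNReal.ofReal_sum_of_nonneg (fun k _ => (hw k).1)]
      _ = 1 := by
          rw [← ENNReal.ofReal_add hnn1 (Finset.sum_nonneg (fun k _ => (hw k).1)),
            sub_add_cancel, ENNReal.ofReal_one]
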